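/- Let n be a positive integer, λ_1,…,λ_n positive reals, τ > 0, and f_1,…,f_n : ℝ → ℝ continuous, with f_j satisfying positive feedback for 1 ≤ j ≤ n−1 and f_n satisfying negative feedback. Let x = (x_1,…,x_n) be a non-oscillating solution of the cyclic system, i.e., there exists T ≥ 0 such that x_j(t) ≠ 0 for every j = 1,…,n and every t ≥ T. Then every component converges to zero: lim_{t→∞} x_j(t) = 0 for all j = 1,…,n. -/

import Mathlib

open Filter Set Topology


private lemma barrier {a ε c : ℝ} (hc : 0 < c) {y d : ℝ → ℝ}
    (hcont : ContinuousOn y (Set.Ici a))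
    (hderiv : ∀ t, a < t → HasDerivAt y (d t) t)
    (hcond : ∀ t, a < t → ε ≤ y t → d t ≤ -c) :
    ∀ᶠ t in Filter.atTop, y t < ε := by
  have step1 : ∃ t1, a < t1 ∧ y t1 < ε := by
    by_contra hcon
    push_neg at hcon
    set b : ℝ := a + 1 with hb
    have hab : a < b := by simp [hb]
    set K : ℝ := (y b - ε) / c + 1 with hK
    have hybe : ε ≤ y b := hcon b hab
    have hK0 : 0 < K := by
      have : 0 ≤ (y b - ε) / c := div_nonneg (by linarith) hc.le
      simp only [hK]; linarith
    have hcK : c * K = y b - ε + c := by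
      rw [hK, mul_add, mul_one, mul_div_cancel₀ _ hc.ne']
    have hsub : Set.Icc b (b + K) ⊆ Set.Ici a := fun u hu => le_of_lt (lt_of_lt_of_le hab hu.1)
    have hder : ∀ t ∈ interior (Set.Icc b (b + K)),
        HasDerivAt (fun u => y u + c * u) (d t + c * 1) t := by
      intro t ht
      rw [interior_Icc] at ht
      exact (hderiv t (lt_trans hab ht.1)).add ((hasDerivAt_id t).const_mul c)
    have hmono : AntitoneOn (fun t => y t + c * t) (Set.Icc b (b + K)) := by
      apply antitoneOn_of_deriv_nonpos (convex_Icc _ _)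
      · exact (hcont.mono hsub).add (continuous_const.mul continuous_id).continuousOn
      · intro t ht
        exact (hder t ht).differentiableAt.differentiableWithinAt
      · intro t ht
        rw [(hder t ht).deriv]
        rw [interior_Icc] at ht
        have := hcond t (lt_trans hab ht.1) (hcon t (lt_trans hab ht.1))
        linarith
    have h2 := hmono (Set.left_mem_Icc.2 (by linarith)) (Set.right_mem_Icc.2 (by linarith))
      (by linarith)
    have h3 := hcon (b + K) (by linarith)
    simp only at h2
    linarith
  obtain ⟨t1, hat1, ht1⟩ := step1
  rw [Filter.eventually_atTop]
  refine ⟨t1, fun t2 ht2 => ?_⟩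
  by_contra hy2
  push_neg at hy2
  have ht12 : t1 < t2 :=
    lt_of_le_of_ne ht2 (fun h => absurd hy2 (by rw [← h]; exact not_le.2 ht1))
  set S : Set ℝ := {t | t ∈ Set.Icc t1 t2 ∧ ε ≤ y t} with hS
  have hSne : S.Nonempty := ⟨t2, ⟨⟨ht2, le_refl t2⟩, hy2⟩⟩
  have hSclosed : IsClosed S := by
    have hcc : ContinuousOn y (Set.Icc t1 t2) :=
      hcont.mono (fun u hu => (lt_of_lt_of_le hat1 hu.1).le)
    have h := hcc.preimage_isClosed_of_isClosed isClosed_Icc (isClosed_Ici (a := ε))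
    have hEq : S = Set.Icc t1 t2 ∩ y ⁻¹' Set.Ici ε := by
      ext u
      simp [hS, Set.mem_preimage, Set.mem_Ici]
    rw [hEq]; exact h
  have hbdd : BddBelow S := ⟨t1, fun u hu => hu.1.1⟩
  have hsS : sInf S ∈ S := hSclosed.csInf_mem hSne hbdd
  set s := sInf S with hs
  have hs1 : t1 < s :=
    lt_of_le_of_ne hsS.1.1 (fun h => absurd hsS.2 (by rw [← h]; exact not_le.2 ht1))
  have hsa : a < s := lt_trans hat1 hs1
  have hds : d s ≤ -c := hcond s hsa hsS.2
  have hds0 : d s < 0 := lt_of_le_of_lt hds (by linarith)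
  have hslope := hasDerivAt_iff_tendsto_slope.1 (hderiv s hsa)
  have hev : ∀ᶠ u in 𝓝[<] s, slope y s u < 0 := by
    have h1 : ∀ᶠ u in 𝓝[≠] s, slope y s u < 0 := hslope.eventually_lt_const hds0
    exact h1.filter_mono
      (nhdsWithin_mono s (fun u hu => Set.mem_compl_singleton_iff.2 (ne_of_lt hu)))
  have hIoo : Set.Ioo t1 s ∈ 𝓝[<] s := Ioo_mem_nhdsLT_of_mem ⟨hs1, le_refl s⟩
  obtain ⟨u, hu1, hu2⟩ := (hev.and (Filter.eventually_of_mem hIoo (fun u hu => hu))).exists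
  have hus : u - s < 0 := by linarith [hu2.2]
  have hpos : 0 < y u - y s := by
    have hslope_eq : slope y s u = (y u - y s) / (u - s) := slope_def_field y s u
    rw [hslope_eq] at hu1
    rcases div_neg_iff.1 hu1 with ⟨h1, h2⟩ | ⟨h1, h2⟩
    · linarith
    · linarith
  have hyu : ε ≤ y u := by linarith [hsS.2]
  have huS : u ∈ S := ⟨⟨hu2.1.le, le_trans hu2.2.le hsS.1.2⟩, hyu⟩
  exact absurd (csInf_le hbdd huS) (not_le.2 hu2.2)


private lemma tendsto_opposed {a lam : ℝ} (hlam : 0 < lam) {y g : ℝ → ℝ}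
    (hcont : ContinuousOn y (Set.Ici a))
    (hderiv : ∀ t, a < t → HasDerivAt y (-lam * y t + g t) t)
    (hy : ∀ t, a < t → 0 < y t) (hg : ∀ t, a < t → g t ≤ 0) :
    Filter.Tendsto y Filter.atTop (nhds 0) := by
  rw [Metric.tendsto_nhds]
  intro ε hε
  have h1 : ∀ᶠ t in atTop, y t < ε := by
    refine barrier (mul_pos hlam hε) hcont hderiv (fun t ht hyt => ?_)
    have h2 := hg t ht
    nlinarith
  have h2 : ∀ᶠ t in atTop, a < t := eventually_gt_atTop a
  filter_upwards [h1, h2] with t h1t h2t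
  rw [Real.dist_eq, sub_zero, abs_lt]
  exact ⟨by linarith [hy t h2t], h1t⟩

private lemma tendsto_opposed_neg {a lam : ℝ} (hlam : 0 < lam) {y g : ℝ → ℝ}
    (hcont : ContinuousOn y (Set.Ici a))
    (hderiv : ∀ t, a < t → HasDerivAt y (-lam * y t + g t) t)
    (hy : ∀ t, a < t → y t < 0) (hg : ∀ t, a < t → 0 ≤ g t) :
    Filter.Tendsto y Filter.atTop (nhds 0) := by
  have h := tendsto_opposed (a := a) hlam (y := fun t => -y t) (g := fun t => -g t)
      hcont.neg
      (fun t ht => by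
        have := (hderiv t ht).fun_neg
        exact this.congr_deriv (by ring))
      (fun t ht => neg_pos.2 (hy t ht))
      (fun t ht => neg_nonpos.2 (hg t ht))
  have h2 := h.neg
  simpa using h2

private lemma tendsto_input {a lam : ℝ} (hlam : 0 < lam) {y g : ℝ → ℝ}
    (hcont : ContinuousOn y (Set.Ici a))
    (hderiv : ∀ t, a < t → HasDerivAt y (-lam * y t + g t) t)
    (hg : Filter.Tendsto g Filter.atTop (nhds 0)) :
    Filter.Tendsto y Filter.atTop (nhds 0) := by
  rw [Metric.tendsto_nhds]
  intro ε hε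
  have hsm : ∀ᶠ t in atTop, |g t| < lam * ε / 2 := by
    have h := Metric.tendsto_nhds.1 hg (lam * ε / 2) (by positivity)
    simpa [Real.dist_eq] using h
  obtain ⟨t0, ht0⟩ := Filter.eventually_atTop.1 hsm
  set b := max t0 a with hb
  have hba : ∀ t, b < t → a < t := fun t ht => lt_of_le_of_lt (le_max_right t0 a) ht
  have hbt0 : ∀ t, b < t → |g t| < lam * ε / 2 :=
    fun t ht => ht0 t (le_of_lt (lt_of_le_of_lt (le_max_left t0 a) ht))
  have hsub : Set.Ici b ⊆ Set.Ici a := Set.Ici_subset_Ici.2 (le_max_right t0 a)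
  have h1 : ∀ᶠ t in atTop, y t < ε := by
    refine barrier (a := b) (show (0:ℝ) < lam * ε / 2 by positivity) (hcont.mono hsub)
      (fun t ht => hderiv t (hba t ht)) (fun t ht hyt => ?_)
    have h2 := (abs_lt.1 (hbt0 t ht)).2
    nlinarith
  have h1' : ∀ᶠ t in atTop, -y t < ε := by
    refine barrier (a := b) (show (0:ℝ) < lam * ε / 2 by positivity)
      (y := fun t => -y t) (d := fun t => lam * y t - g t)
      (hcont.mono hsub).neg
      (fun t ht => by
        have := (hderiv t (hba t ht)).fun_neg
        exact this.congr_deriv (by ring))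
      (fun t ht hyt => ?_)
    have h2 := (abs_lt.1 (hbt0 t ht)).1
    nlinarith
  filter_upwards [h1, h1'] with t hh1 hh2
  rw [Real.dist_eq, sub_zero, abs_lt]
  exact ⟨by linarith, hh1⟩

private lemma sign_const {T : ℝ} {y : ℝ → ℝ} (hc : ContinuousOn y (Set.Ici T))
    (hnz : ∀ t, T ≤ t → y t ≠ 0) :
    (∀ t, T ≤ t → 0 < y t) ∨ (∀ t, T ≤ t → y t < 0) := by
  rcases (hnz T le_rfl).lt_or_gt with hT | hT
  · right
    intro t ht
    rcases (hnz t ht).lt_or_gt with h | h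
    · exact h
    · exfalso
      have hcc : ContinuousOn y (Set.Icc T t) := hc.mono (fun u hu => hu.1)
      have h0 : (0:ℝ) ∈ Set.Icc (y T) (y t) := ⟨hT.le, h.le⟩
      obtain ⟨s, hs, hys⟩ := intermediate_value_Icc ht hcc h0
      exact hnz s hs.1 hys
  · left
    intro t ht
    rcases (hnz t ht).lt_or_gt with h | h
    · exfalso
      have hcc : ContinuousOn y (Set.Icc T t) := hc.mono (fun u hu => hu.1)
      have h0 : (0:ℝ) ∈ Set.Icc (y t) (y T) := ⟨h.le, hT.le⟩
      obtain ⟨s, hs, hys⟩ := intermediate_value_Icc' ht hcc h0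
      exact hnz s hs.1 hys
    · exact h

private lemma posfb_zero {f : ℝ → ℝ} (hc : Continuous f)
    (h : ∀ y : ℝ, y ≠ 0 → 0 < y * f y) : f 0 = 0 := by
  have hseq : Tendsto (fun k : ℕ => (1:ℝ) / (k + 1)) atTop (nhds 0) :=
    tendsto_one_div_add_atTop_nhds_zero_nat
  have h1 : Tendsto (fun k : ℕ => f (1 / (k + 1))) atTop (nhds (f 0)) :=
    (hc.tendsto 0).comp hseq
  have h2 : Tendsto (fun k : ℕ => f (-(1 / (k + 1)))) atTop (nhds (f 0)) :=
    (hc.tendsto 0).comp (by simpa using hseq.neg)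
  have hub : f 0 ≤ 0 := by
    refine le_of_tendsto h2 (Filter.Eventually.of_forall fun k => ?_)
    have hkpos : (0:ℝ) < 1 / (k + 1) := by positivity
    have := h (-(1 / (k + 1))) (by linarith)
    nlinarith
  have hlb : 0 ≤ f 0 := by
    refine ge_of_tendsto h1 (Filter.Eventually.of_forall fun k => ?_)
    have hkpos : (0:ℝ) < 1 / (k + 1) := by positivity
    have := h (1 / (k + 1)) (by linarith)
    nlinarith
  linarith

private lemma negfb_zero {f : ℝ → ℝ} (hc : Continuous f)
    (h : ∀ y : ℝ, y ≠ 0 → y * f y < 0) : f 0 = 0 := by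
  have := posfb_zero hc.neg (f := fun y => -f y) (fun y hy => by
    have := h y hy
    show 0 < y * (-f y)
    nlinarith)
  simpa using this

/-- A solution of the cyclic system with delay on `[T, ∞)` (0-indexed components
`x 0, …, x (n-1)`). -/
def IsCyclicSolution (n : ℕ) (lam : ℕ → ℝ) (τ : ℝ) (f : ℕ → ℝ → ℝ)
    (T : ℝ) (x : ℕ → ℝ → ℝ) : Prop :=
  ContinuousOn (x 0) (Set.Ici (T - τ)) ∧
  (∀ j < n, ContinuousOn (x j) (Set.Ici T)) ∧
  ∀ t : ℝ, T < t →
    (∀ j : ℕ, j + 1 < n →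
      HasDerivAt (x j) (-lam j * x j t + f j (x (j + 1) t)) t) ∧
    HasDerivAt (x (n - 1)) (-lam (n - 1) * x (n - 1) t + f (n - 1) (x 0 (t - τ))) t

/-- Corollary 3: all components of any non-oscillating solution of the cyclic
system converge to zero as `t → ∞`. -/
theorem nonoscillating_solution_tends_to_zero
    (n : ℕ) (hn : 0 < n) (lam : ℕ → ℝ) (hlam : ∀ j < n, 0 < lam j)
    (τ : ℝ) (hτ : 0 < τ) (f : ℕ → ℝ → ℝ) (hf : ∀ j < n, Continuous (f j))
    (hpos : ∀ j < n - 1, ∀ y : ℝ, y ≠ 0 → 0 < y * f j y)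
    (hneg : ∀ y : ℝ, y ≠ 0 → y * f (n - 1) y < 0)
    (x : ℕ → ℝ → ℝ) (hx : IsCyclicSolution n lam τ f 0 x)
    (T : ℝ) (hT : 0 ≤ T)
    (hnz : ∀ j < n, ∀ t : ℝ, T ≤ t → x j t ≠ 0) :
    ∀ j < n, Filter.Tendsto (x j) Filter.atTop (nhds 0) := by
  obtain ⟨hc0, hcj, hode⟩ := hx
  -- constant signs
  have hsgn : ∀ j, j < n → (∀ t, T ≤ t → 0 < x j t) ∨ (∀ t, T ≤ t → x j t < 0) := fun j hj =>
    sign_const ((hcj j hj).mono (Set.Ici_subset_Ici.2 hT)) (hnz j hj)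
  -- derivative for t > T
  have hderT : ∀ j, j + 1 < n → ∀ t, T < t →
      HasDerivAt (x j) (-lam j * x j t + f j (x (j + 1) t)) t := by
    intro j hj t ht
    exact (hode t (lt_of_le_of_lt hT ht)).1 j hj
  have hderN : ∀ t, T < t →
      HasDerivAt (x (n - 1)) (-lam (n - 1) * x (n - 1) t + f (n - 1) (x 0 (t - τ))) t :=
    fun t ht => (hode t (lt_of_le_of_lt hT ht)).2
  -- a first component tending to zero
  have hexists : ∃ j0, j0 < n ∧ Filter.Tendsto (x j0) Filter.atTop (nhds 0) := by
    by_cases hdif : ∃ j, j + 1 < n ∧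
        ((∀ t, T ≤ t → 0 < x j t) ∧ (∀ t, T ≤ t → x (j + 1) t < 0) ∨
         (∀ t, T ≤ t → x j t < 0) ∧ (∀ t, T ≤ t → 0 < x (j + 1) t))
    · obtain ⟨j, hj, hcase⟩ := hdif
      refine ⟨j, by omega, ?_⟩
      rcases hcase with ⟨hP, hN⟩ | ⟨hN, hP⟩
      · refine tendsto_opposed (a := T) (hlam j (by omega))
          ((hcj j (by omega)).mono (Set.Ici_subset_Ici.2 hT))
          (fun t ht => hderT j hj t ht)
          (fun t ht => hP t ht.le) (fun t ht => ?_)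
        have h1 := hN t ht.le
        have h2 := hpos j (by omega) (x (j + 1) t) (ne_of_lt h1)
        nlinarith
      · refine tendsto_opposed_neg (a := T) (hlam j (by omega))
          ((hcj j (by omega)).mono (Set.Ici_subset_Ici.2 hT))
          (fun t ht => hderT j hj t ht)
          (fun t ht => hN t ht.le) (fun t ht => ?_)
        have h1 := hP t ht.le
        have h2 := hpos j (by omega) (x (j + 1) t) (ne_of_gt h1)
        nlinarith
    · -- all components have the same sign
      have hsame : ∀ j, j + 1 < n →
          ((∀ t, T ≤ t → 0 < x j t) → (∀ t, T ≤ t → 0 < x (j + 1) t)) ∧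
          ((∀ t, T ≤ t → x j t < 0) → (∀ t, T ≤ t → x (j + 1) t < 0)) := by
        intro j hj
        constructor
        · intro hPj
          rcases hsgn (j + 1) hj with h | h
          · exact h
          · exact absurd ⟨j, hj, Or.inl ⟨hPj, h⟩⟩ hdif
        · intro hNj
          rcases hsgn (j + 1) hj with h | h
          · exact absurd ⟨j, hj, Or.inr ⟨hNj, h⟩⟩ hdif
          · exact h
      have hTτ : (0:ℝ) ≤ T + τ := by linarith
      have hcontN : ContinuousOn (x (n - 1)) (Set.Ici (T + τ)) :=
        (hcj (n - 1) (by omega)).mono (Set.Ici_subset_Ici.2 (by linarith))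
      have hderN' : ∀ t, T + τ < t →
          HasDerivAt (x (n - 1)) (-lam (n - 1) * x (n - 1) t + f (n - 1) (x 0 (t - τ))) t :=
        fun t ht => hderN t (by linarith)
      rcases hsgn 0 hn with h0 | h0
      · have hall : ∀ j, j < n → ∀ t, T ≤ t → 0 < x j t := by
          intro j
          induction j with
          | zero => intro _; exact h0
          | succ k ih => intro hk; exact (hsame k hk).1 (ih (by omega))
        refine ⟨n - 1, by omega, ?_⟩
        refine tendsto_opposed (a := T + τ) (hlam (n - 1) (by omega)) hcontN hderN'
          (fun t ht => hall (n - 1) (by omega) t (by linarith)) (fun t ht => ?_)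
        have h1 : 0 < x 0 (t - τ) := h0 (t - τ) (by linarith)
        have h2 := hneg (x 0 (t - τ)) (ne_of_gt h1)
        nlinarith
      · have hall : ∀ j, j < n → ∀ t, T ≤ t → x j t < 0 := by
          intro j
          induction j with
          | zero => intro _; exact h0
          | succ k ih => intro hk; exact (hsame k hk).2 (ih (by omega))
        refine ⟨n - 1, by omega, ?_⟩
        refine tendsto_opposed_neg (a := T + τ) (hlam (n - 1) (by omega)) hcontN hderN'
          (fun t ht => hall (n - 1) (by omega) t (by linarith)) (fun t ht => ?_)
        have h1 : x 0 (t - τ) < 0 := h0 (t - τ) (by linarith)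
        have h2 := hneg (x 0 (t - τ)) (ne_of_lt h1)
        nlinarith
  -- propagation steps
  have step_down : ∀ j, j + 1 < n → Filter.Tendsto (x (j + 1)) Filter.atTop (nhds 0) →
      Filter.Tendsto (x j) Filter.atTop (nhds 0) := by
    intro j hj h1
    have hfj : Continuous (f j) := hf j (by omega)
    have hf0 : f j 0 = 0 := posfb_zero hfj (hpos j (by omega))
    refine tendsto_input (a := T) (hlam j (by omega))
      ((hcj j (by omega)).mono (Set.Ici_subset_Ici.2 hT))
      (fun t ht => hderT j hj t ht) ?_
    have h2 : Filter.Tendsto (fun t => f j (x (j + 1) t)) Filter.atTop (nhds (f j 0)) :=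
      (hfj.tendsto 0).comp h1
    rwa [hf0] at h2
  have step_wrap : Filter.Tendsto (x 0) Filter.atTop (nhds 0) →
      Filter.Tendsto (x (n - 1)) Filter.atTop (nhds 0) := by
    intro h0
    have hfn : Continuous (f (n - 1)) := hf (n - 1) (by omega)
    have hf0 : f (n - 1) 0 = 0 := negfb_zero hfn hneg
    refine tendsto_input (a := T) (hlam (n - 1) (by omega))
      ((hcj (n - 1) (by omega)).mono (Set.Ici_subset_Ici.2 hT)) hderN ?_
    have hdel : Filter.Tendsto (fun t : ℝ => t - τ) Filter.atTop Filter.atTop := by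
      simpa [sub_eq_add_neg] using tendsto_atTop_add_const_right Filter.atTop (-τ) tendsto_id
    have h2 : Filter.Tendsto (fun t => f (n - 1) (x 0 (t - τ))) Filter.atTop (nhds (f (n - 1) 0)) :=
      ((hfn.tendsto 0).comp h0).comp hdel
    rwa [hf0] at h2
  have aux : ∀ m j, j + m < n → Filter.Tendsto (x (j + m)) Filter.atTop (nhds 0) →
      Filter.Tendsto (x j) Filter.atTop (nhds 0) := by
    intro m
    induction m with
    | zero => intro j _ h; simpa using h
    | succ m ih =>
        intro j hj h
        have h' : Filter.Tendsto (x ((j + m) + 1)) Filter.atTop (nhds 0) := by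
          have heq : j + (m + 1) = (j + m) + 1 := by omega
          rwa [heq] at h
        exact ih j (by omega) (step_down (j + m) (by omega) h')
  obtain ⟨j0, hj0n, hj0⟩ := hexists
  have h0 : Filter.Tendsto (x 0) Filter.atTop (nhds 0) := by
    have := aux j0 0 (by omega) (by simpa using hj0)
    exact this
  have hl : Filter.Tendsto (x (n - 1)) Filter.atTop (nhds 0) := step_wrap h0
  intro j hj
  refine aux (n - 1 - j) j (by omega) ?_
  have heq : j + (n - 1 - j) = n - 1 := by omega
  rw [heq]
  exact hl
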